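/- arXiv:2208.01119 — 10 statements merged into one kernel-verified Lean document; each statement's English description precedes it below -/
import Mathlib

section
/- Let G be a finite directed graph, and let v be a vertex without a self-loop whose unique in-neighbor is u (i.e., E w v holds exactly when w = u). Then every directed cycle through v also passes through u, and there exists a minimum directed feedback vertex set of G that does not contain v. -/
/-- The index following `i` cyclically in the list `l`. -/
def cycNext (l : List V) (i : Fin l.length) : Fin l.length :=
  ⟨(i.val + 1) % l.length, Nat.mod_lt _ i.pos⟩

/-- `l` is a directed cycle of the digraph with edge relation `E`: a nonempty list of
pairwise distinct vertices with an edge from each vertex to the cyclically next one. -/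
def IsDicycle (E : V → V → Prop) (l : List V) : Prop :=
  l ≠ [] ∧ l.Nodup ∧ ∀ i : Fin l.length, E (l.get i) (l.get (cycNext l i))

/-- `(u, w)` is a chord of the cycle `l`: an edge between vertices of `l`
that is not one of the cycle's edges. -/
def IsChord (E : V → V → Prop) (l : List V) (u w : V) : Prop :=
  u ∈ l ∧ w ∈ l ∧ E u w ∧
    ∀ i : Fin l.length, ¬(l.get i = u ∧ l.get (cycNext l i) = w)

/-- `l` is a chordless directed cycle. -/
def IsChordlessDicycle (E : V → V → Prop) (l : List V) : Prop :=
  IsDicycle E l ∧ ∀ u w, ¬ IsChord E l u w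

/-- `S` is a directed feedback vertex set: the subgraph induced on the complement
of `S` contains no directed cycle. -/
def IsDFVS (E : V → V → Prop) (S : Set V) : Prop :=
  ¬ ∃ l : List V, IsDicycle (fun a b => E a b ∧ a ∉ S ∧ b ∉ S) l

theorem unique_in_neighbor_reduction {V : Type*} [Fintype V] (E : V → V → Prop)
    (u v : V) (hloop : ¬ E v v) (huniq : ∀ w, E w v ↔ w = u) :
    (∀ l : List V, IsDicycle E l → v ∈ l → u ∈ l) ∧
    ∃ S : Finset V, IsDFVS E ↑S ∧ v ∉ S ∧
      ∀ T : Finset V, IsDFVS E ↑T → S.card ≤ T.card := by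
  classical
  have hne : v ≠ u := fun h => hloop ((huniq v).mpr h)
  have part1 : ∀ l : List V, IsDicycle E l → v ∈ l → u ∈ l := by
    intro l hl hv
    obtain ⟨i, hi⟩ := List.mem_iff_get.mp hv
    have hn : 0 < l.length := i.pos
    set j : Fin l.length := ⟨(i.val + (l.length - 1)) % l.length, Nat.mod_lt _ hn⟩ with hj
    have hnext : cycNext l j = i := by
      unfold cycNext
      ext
      simp only [hj, Nat.mod_add_mod]
      have h1 : i.val + (l.length - 1) + 1 = i.val + l.length := by omega
      rw [h1, Nat.add_mod_right, Nat.mod_eq_of_lt i.isLt]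
    have hcyc := hl.2.2 j
    rw [hnext, hi] at hcyc
    have := (huniq _).mp hcyc
    rw [← this]
    exact List.get_mem l j
  refine ⟨part1, ?_⟩
  have huniv : IsDFVS E (↑(Finset.univ : Finset V)) := by
    rintro ⟨l, hl⟩
    have hn : 0 < l.length := by
      cases l with
      | nil => exact absurd rfl hl.1
      | cons a t => simp
    have := (hl.2.2 ⟨0, hn⟩).2.1
    simp at this
  have hex : ∃ n, ∃ S : Finset V, IsDFVS E ↑S ∧ S.card = n :=
    ⟨_, Finset.univ, huniv, rfl⟩
  obtain ⟨S, hS, hScard⟩ := Nat.find_spec hex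
  have hmin : ∀ T : Finset V, IsDFVS E ↑T → S.card ≤ T.card := by
    intro T hT
    rw [hScard]
    exact Nat.find_min' hex ⟨T, hT, rfl⟩
  by_cases hvS : v ∈ S
  · -- replace v by u
    set S' : Finset V := insert u (S.erase v) with hS'
    have hvS' : v ∉ S' := by
      simp [hS', hne]
    have hDFVS' : IsDFVS E (↑S' : Set V) := by
      rintro ⟨l, hl⟩
      have hlE : IsDicycle E l := ⟨hl.1, hl.2.1, fun i => (hl.2.2 i).1⟩
      have hnotin : ∀ x ∈ l, x ∉ (↑S' : Set V) := by
        intro x hx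
        obtain ⟨i, hi⟩ := List.mem_iff_get.mp hx
        rw [← hi]
        exact (hl.2.2 i).2.1
      by_cases hvl : v ∈ l
      · have hul : u ∈ l := part1 l hlE hvl
        exact hnotin u hul (by simp [hS'])
      · apply hS
        refine ⟨l, hl.1, hl.2.1, fun i => ⟨(hl.2.2 i).1, ?_, ?_⟩⟩
        · have h1 := hnotin _ (List.get_mem l i)
          have h2 : l.get i ≠ v := fun h => hvl (h ▸ List.get_mem l i)
          simp [hS'] at h1
          exact fun hmem => h2 (h1.2 hmem)
        · have h1 := hnotin _ (List.get_mem l (cycNext l i))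
          have h2 : l.get (cycNext l i) ≠ v := fun h => hvl (h ▸ List.get_mem l (cycNext l i))
          simp [hS'] at h1
          exact fun hmem => h2 (h1.2 hmem)
    refine ⟨S', hDFVS', hvS', fun T hT => ?_⟩
    calc S'.card ≤ (S.erase v).card + 1 := Finset.card_insert_le _ _
      _ ≤ S.card := by rw [Finset.card_erase_of_mem hvS]; have := Finset.card_pos.mpr ⟨v, hvS⟩; omega
      _ ≤ T.card := hmin T hT
  · exact ⟨S, hS, hvS, hmin⟩
end

section
/- Let G be a finite directed graph and let u, v be distinct vertices such that the subgraph induced on the set of vertices reachable from u in G with v deleted contains no directed cycle. Then every directed cycle of G passing through u also passes through v; consequently, if S is a directed feedback vertex set with u ∈ S, then (S \ {u}) ∪ {v} is also a directed feedback vertex set of no larger cardinality, and there exists a minimum directed feedback vertex set of G not containing u. -/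
lemma cyc_reach {V : Type*} {R : V → V → Prop} {l : List V}
    (h : ∀ i : Fin l.length, R (l.get i) (l.get (cycNext l i)))
    (i j : Fin l.length) : Relation.ReflTransGen R (l.get i) (l.get j) := by
  have key : ∀ k : ℕ, Relation.ReflTransGen R (l.get i)
      (l.get ⟨(i.val + k) % l.length, Nat.mod_lt _ i.pos⟩) := by
    intro k
    induction k with
    | zero =>
      have : (⟨(i.val + 0) % l.length, Nat.mod_lt _ i.pos⟩ : Fin l.length) = i :=
        Fin.ext (by simp [Nat.mod_eq_of_lt i.isLt])
      rw [this]
    | succ k ih =>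
      refine ih.tail ?_
      have he : cycNext l ⟨(i.val + k) % l.length, Nat.mod_lt _ i.pos⟩ =
          ⟨(i.val + (k + 1)) % l.length, Nat.mod_lt _ i.pos⟩ := by
        apply Fin.ext
        simp only [cycNext, Nat.mod_add_mod]
        ring_nf
      have := h ⟨(i.val + k) % l.length, Nat.mod_lt _ i.pos⟩
      rwa [he] at this
  have hidx : (i.val + (j.val + l.length - i.val)) % l.length = j.val := by
    have h1 : i.val + (j.val + l.length - i.val) = j.val + l.length := by
      have := i.isLt; omega
    rw [h1, Nat.add_mod_right, Nat.mod_eq_of_lt j.isLt]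
  have := key (j.val + l.length - i.val)
  rwa [show (⟨(i.val + (j.val + l.length - i.val)) % l.length, Nat.mod_lt _ i.pos⟩ :
      Fin l.length) = j from Fin.ext hidx] at this

lemma IsDicycle.mono' {V : Type*} {E E' : V → V → Prop} (h : ∀ a b, E' a b → E a b)
    {l : List V} (hl : IsDicycle E' l) : IsDicycle E l :=
  ⟨hl.1, hl.2.1, fun i => h _ _ (hl.2.2 i)⟩

theorem vertex_domination_reduction {V : Type*} [Fintype V] [DecidableEq V]
    (E : V → V → Prop) (u v : V) (huv : u ≠ v)
    (hacyc : ¬ ∃ l : List V, IsDicycle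
      (fun a b => E a b ∧
        Relation.ReflTransGen (fun x y => E x y ∧ x ≠ v ∧ y ≠ v) u a ∧
        Relation.ReflTransGen (fun x y => E x y ∧ x ≠ v ∧ y ≠ v) u b) l) :
    (∀ l : List V, IsDicycle E l → u ∈ l → v ∈ l) ∧
    (∀ S : Finset V, IsDFVS E ↑S → u ∈ S →
      IsDFVS E ↑(insert v (S.erase u)) ∧ (insert v (S.erase u)).card ≤ S.card) ∧
    ∃ S : Finset V, IsDFVS E ↑S ∧ u ∉ S ∧
      ∀ T : Finset V, IsDFVS E ↑T → S.card ≤ T.card := by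
  classical
  have part1 : ∀ l : List V, IsDicycle E l → u ∈ l → v ∈ l := by
    intro l hl hu
    by_contra hv
    apply hacyc
    refine ⟨l, hl.1, hl.2.1, ?_⟩
    obtain ⟨iu, hiu⟩ := List.mem_iff_get.mp hu
    have hRedge : ∀ i : Fin l.length,
        (fun x y => E x y ∧ x ≠ v ∧ y ≠ v) (l.get i) (l.get (cycNext l i)) := by
      intro i
      exact ⟨hl.2.2 i, fun h => hv (h ▸ l.get_mem _),
        fun h => hv (h ▸ l.get_mem _)⟩
    intro i
    refine ⟨hl.2.2 i, ?_, ?_⟩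
    · have := cyc_reach (R := fun x y => E x y ∧ x ≠ v ∧ y ≠ v) hRedge iu i; rwa [hiu] at this
    · have := cyc_reach (R := fun x y => E x y ∧ x ≠ v ∧ y ≠ v) hRedge iu (cycNext l i); rwa [hiu] at this
  have part2 : ∀ S : Finset V, IsDFVS E ↑S → u ∈ S →
      IsDFVS E ↑(insert v (S.erase u)) ∧ (insert v (S.erase u)).card ≤ S.card := by
    intro S hS hu
    constructor
    · rintro ⟨l, hl⟩
      have hlE : IsDicycle E l := hl.mono' (fun a b h => h.1)
      have hmem : ∀ x ∈ l, x ∉ (↑(insert v (S.erase u)) : Set V) := by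
        intro x hx
        obtain ⟨i, rfl⟩ := List.mem_iff_get.mp hx
        exact (hl.2.2 i).2.1
      have hvl : v ∉ l := fun h => hmem v h (by simp)
      by_cases hul : u ∈ l
      · exact hvl (part1 l hlE hul)
      · apply hS
        refine ⟨l, hl.1, hl.2.1, ?_⟩
        intro i
        have hxS : ∀ x ∈ l, x ∉ (↑S : Set V) := by
          intro x hx hxS
          have hxu : x ≠ u := fun h => hul (h ▸ hx)
          exact hmem x hx (by simp [Finset.mem_insert, Finset.mem_erase, hxu, hxS])
        exact ⟨hl.2.2 i |>.1, hxS _ (l.get_mem _), hxS _ (l.get_mem _)⟩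
    · calc (insert v (S.erase u)).card ≤ (S.erase u).card + 1 :=
            Finset.card_insert_le _ _
        _ = S.card := Finset.card_erase_add_one hu
  refine ⟨part1, part2, ?_⟩
  have huniv : IsDFVS E (↑(Finset.univ : Finset V)) := by
    rintro ⟨l, hne, _, hedge⟩
    have hpos : 0 < l.length := List.length_pos_iff.mpr hne
    exact (hedge ⟨0, hpos⟩).2.1 (by simp)
  obtain ⟨S₀, hS₀mem, hS₀min⟩ := Finset.exists_min_image
    (Finset.univ.filter fun S : Finset V => IsDFVS E ↑S) Finset.card
    ⟨Finset.univ, Finset.mem_filter.mpr ⟨Finset.mem_univ _, huniv⟩⟩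
  have hS₀ : IsDFVS E ↑S₀ := (Finset.mem_filter.mp hS₀mem).2
  by_cases hu : u ∈ S₀
  · obtain ⟨hD, hc⟩ := part2 S₀ hS₀ hu
    refine ⟨insert v (S₀.erase u), hD, ?_, ?_⟩
    · simp [Finset.mem_insert, Finset.mem_erase, huv]
    · intro T hT
      exact hc.trans (hS₀min T (by simp [hT]))
  · exact ⟨S₀, hS₀, hu, fun T hT => hS₀min T (by simp [hT])⟩
end

section
/- Let G be a finite directed graph with distinct vertices u, v such that E u v and E v u both hold, neither has a self-loop, and for every vertex w ∉ {u, v}: E w u ↔ E w v and E u w ↔ E v w. Then every directed feedback vertex set of G contains u or v, and if S is a directed feedback vertex set with v ∈ S and u ∉ S, then (S \ {v}) ∪ {u} is also a directed feedback vertex set. Consequently there exists a minimum directed feedback vertex set of G containing u. -/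
lemma dicycle_mem_not {V : Type*} (E : V → V → Prop) (S : Set V) (l : List V)
    (h : IsDicycle (fun a b => E a b ∧ a ∉ S ∧ b ∉ S) l) : ∀ x ∈ l, x ∉ S := by
  intro x hx
  obtain ⟨i, rfl⟩ := List.mem_iff_get.mp hx
  exact (h.2.2 i).2.1

theorem pairwise_exclusion_reduction {V : Type*} [Fintype V] (E : V → V → Prop)
    (u v : V) (huv : u ≠ v) (h1 : E u v) (h2 : E v u)
    (hu : ¬ E u u) (hv : ¬ E v v)
    (htwin : ∀ w, w ≠ u → w ≠ v → ((E w u ↔ E w v) ∧ (E u w ↔ E v w))) :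
    (∀ S : Set V, IsDFVS E S → u ∈ S ∨ v ∈ S) ∧
    (∀ S : Set V, IsDFVS E S → v ∈ S → u ∉ S → IsDFVS E ((S \ {v}) ∪ {u})) ∧
    ∃ S : Finset V, IsDFVS E ↑S ∧ u ∈ S ∧
      ∀ T : Finset V, IsDFVS E ↑T → S.card ≤ T.card := by
  classical
  have key1 : ∀ S : Set V, IsDFVS E S → u ∈ S ∨ v ∈ S := by
    intro S hS
    by_contra h
    push_neg at h
    obtain ⟨hu', hv'⟩ := h
    apply hS
    refine ⟨[u, v], by simp, by simp [huv], ?_⟩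
    intro i
    fin_cases i <;> simp [cycNext] <;> tauto
  have key2 : ∀ S : Set V, IsDFVS E S → v ∈ S → u ∉ S → IsDFVS E ((S \ {v}) ∪ {u}) := by
    intro S hS hvS huS hctr
    obtain ⟨l, hne, hnd, hedge⟩ := hctr
    set S' : Set V := (S \ {v}) ∪ {u} with hS'
    have hmem : ∀ x ∈ l, x ∉ S' := dicycle_mem_not E S' l ⟨hne, hnd, hedge⟩
    have hul : u ∉ l := fun h => hmem u h (Or.inr rfl)
    set f : V → V := fun x => if x = v then u else x with hf
    have hnotS : ∀ x ∈ l, (f x) ∉ S := by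
      intro x hx
      by_cases hxv : x = v
      · simp [hf, hxv, huS]
      · have := hmem x hx
        simp [hS', hxv] at this
        simp [hf, hxv, this.2]
    have hmapedge : ∀ a b, a ∈ l → b ∈ l → E a b ∧ a ∉ S' ∧ b ∉ S' →
        E (f a) (f b) ∧ f a ∉ S ∧ f b ∉ S := by
      intro a b hal hbl ⟨hab, _, _⟩
      refine ⟨?_, hnotS a hal, hnotS b hbl⟩
      have hau : a ≠ u := fun h => hul (h ▸ hal)
      have hbu : b ≠ u := fun h => hul (h ▸ hbl)
      by_cases hav : a = v <;> by_cases hbv : b = v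
      · subst hav; subst hbv; exact absurd hab hv
      · subst hav
        simp [hf, hbv]
        exact ((htwin b hbu hbv).2).mpr hab
      · subst hbv
        simp [hf, hav]
        exact ((htwin a hau hav).1).mpr hab
      · simpa [hf, hav, hbv] using hab
    apply hS
    refine ⟨l.map f, by simpa using hne, ?_, ?_⟩
    · apply hnd.map_on
      intro x hx y hy hxy
      have hxu : x ≠ u := fun h => hul (h ▸ hx)
      have hyu : y ≠ u := fun h => hul (h ▸ hy)
      by_cases hxv : x = v <;> by_cases hyv : y = v <;>
        simp [hf, hxv, hyv] at hxy <;> first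
          | exact hxv.trans hyv.symm
          | exact absurd hxy.symm hyu
          | exact absurd hxy hxu
          | exact hxy
    · intro i
      have hlen : (l.map f).length = l.length := List.length_map _
      set j : Fin l.length := ⟨i.val, by omega⟩ with hj
      have e1 : (l.map f).get i = f (l.get j) := by
        simp [hj]
      have e2 : (l.map f).get (cycNext (l.map f) i) = f (l.get (cycNext l j)) := by
        simp [cycNext, hj]
      rw [e1, e2]
      exact hmapedge _ _ (l.get_mem _) (l.get_mem _) (hedge j)
  refine ⟨key1, key2, ?_⟩
  have hne : (Finset.univ.filter (fun S : Finset V => IsDFVS E ↑S)).Nonempty := by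
    refine ⟨Finset.univ, ?_⟩
    simp only [Finset.mem_filter, Finset.mem_univ, true_and]
    intro ⟨l, hl, _, hedge⟩
    have := (hedge ⟨0, List.length_pos_iff.mpr hl⟩).2.1
    simp at this
  obtain ⟨S, hSmem, hSmin⟩ := Finset.exists_min_image _ Finset.card hne
  simp only [Finset.mem_filter, Finset.mem_univ, true_and] at hSmem
  have hSmin' : ∀ T : Finset V, IsDFVS E ↑T → S.card ≤ T.card := by
    intro T hT
    exact hSmin T (by simp [hT])
  by_cases huS : u ∈ S
  · exact ⟨S, hSmem, huS, hSmin'⟩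
  · have hvS : v ∈ S := (key1 _ hSmem).resolve_left huS
    refine ⟨insert u (S.erase v), ?_, Finset.mem_insert_self _ _, ?_⟩
    · have : ((insert u (S.erase v) : Finset V) : Set V) = ((S : Set V) \ {v}) ∪ {u} := by
        simp [Finset.coe_insert, Finset.coe_erase, Set.union_singleton]
      rw [this]
      exact key2 _ hSmem hvS huS
    · intro T hT
      calc (insert u (S.erase v)).card ≤ (S.erase v).card + 1 := Finset.card_insert_le _ _
        _ = S.card := by rw [Finset.card_erase_of_mem hvS]; exact Nat.succ_pred_eq_of_pos (Finset.card_pos.mpr ⟨v, hvS⟩)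
        _ ≤ T.card := hSmin' T hT
end

section
/- Let G be a finite directed graph with distinct vertices u, v having no edges between them or self-loops (¬E u v, ¬E v u, ¬E u u, ¬E v v) and identical in-neighborhoods and out-neighborhoods: for every w ∉ {u, v}, E w u ↔ E w v and E u w ↔ E v w. If S is a directed feedback vertex set of G with u ∈ S and v ∉ S, then S \ {u} is also a directed feedback vertex set of G. -/
lemma isDicycle_iff_chain' {V : Type*} (E : V → V → Prop) (l : List V) (h : l ≠ []) :
    IsDicycle E l ↔ l.Nodup ∧ l.Chain' E ∧ E (l.getLast h) (l.head h) := by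
  have hn : 0 < l.length := List.length_pos_iff.mpr h
  constructor
  · rintro ⟨-, hnd, he⟩
    refine ⟨hnd, ?_, ?_⟩
    · rw [List.Chain', List.isChain_iff_getElem]
      intro i hi
      have := he ⟨i, by omega⟩
      have hmod : (i + 1) % l.length = i + 1 := Nat.mod_eq_of_lt (by omega)
      simpa [cycNext, hmod] using this
    · have := he ⟨l.length - 1, by omega⟩
      have hmod : (l.length - 1 + 1) % l.length = 0 := by
        have h1 : l.length - 1 + 1 = l.length := by omega
        simp [h1]
      rw [List.getLast_eq_getElem, List.head_eq_getElem]
      simpa [cycNext, hmod] using this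
  · rintro ⟨hnd, hc, hlast⟩
    refine ⟨h, hnd, fun i => ?_⟩
    rcases lt_or_ge (i.val + 1) l.length with hi | hi
    · have := List.isChain_iff_getElem.mp hc i.val (by omega)
      have hmod : (i.val + 1) % l.length = i.val + 1 := Nat.mod_eq_of_lt hi
      simpa [cycNext, hmod] using this
    · have hcn : cycNext l i = ⟨0, hn⟩ := by
        apply Fin.ext
        simp only [cycNext]
        have h1 : i.val + 1 = l.length := by omega
        simp [h1]
      have hieq : i = ⟨l.length - 1, by omega⟩ := Fin.ext (by show i.val = l.length - 1; omega)
      rw [hcn, hieq]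
      rw [List.getLast_eq_getElem, List.head_eq_getElem] at hlast
      simpa using hlast

lemma IsDicycle.rotate {V : Type*} {E : V → V → Prop} {l : List V}
    (hl : IsDicycle E l) (k : ℕ) : IsDicycle E (l.rotate k) := by
  obtain ⟨h, hnd, he⟩ := hl
  have hn : 0 < l.length := List.length_pos_iff.mpr h
  refine ⟨by simpa using h, by simpa using hnd, fun i => ?_⟩
  rw [List.get_rotate, List.get_rotate]
  have := he ⟨(i.val + k) % l.length, Nat.mod_lt _ hn⟩
  convert this using 3
  simp only [cycNext, List.length_rotate]
  rw [Nat.mod_add_mod, Nat.mod_add_mod]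
  ring_nf

lemma dicycle_mem_not_in {V : Type*} {E : V → V → Prop} {T : Set V} {l : List V}
    (hl : IsDicycle (fun a b => E a b ∧ a ∉ T ∧ b ∉ T) l) : ∀ a ∈ l, a ∉ T := by
  intro a ha
  obtain ⟨i, rfl⟩ := List.mem_iff_get.mp ha
  exact (hl.2.2 i).2.1

lemma chain'_strengthen {V : Type*} {E : V → V → Prop} {T T' : Set V} {l : List V}
    (hc : l.Chain' (fun a b => E a b ∧ a ∉ T ∧ b ∉ T))
    (hm : ∀ a ∈ l, a ∉ T') :
    l.Chain' (fun a b => E a b ∧ a ∉ T' ∧ b ∉ T') := by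
  rw [List.Chain', List.isChain_iff_getElem] at hc ⊢
  intro i hi
  exact ⟨(hc i hi).1, hm _ (List.getElem_mem _), hm _ (List.getElem_mem _)⟩

theorem twin_removal {V : Type*} [Fintype V] (E : V → V → Prop)
    (u v : V) (huv : u ≠ v)
    (h1 : ¬ E u v) (h2 : ¬ E v u) (hu : ¬ E u u) (hv : ¬ E v v)
    (htwin : ∀ w, w ≠ u → w ≠ v → ((E w u ↔ E w v) ∧ (E u w ↔ E v w)))
    (S : Set V) (hS : IsDFVS E S) (huS : u ∈ S) (hvS : v ∉ S) :
    IsDFVS E (S \ {u}) := by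
  rintro ⟨l, hl⟩
  apply hS
  by_cases hul : u ∈ l
  · -- rotate l so that u is at the head
    obtain ⟨i, hi⟩ := List.mem_iff_get.mp hul
    have hl' : IsDicycle (fun a b => E a b ∧ a ∉ S \ {u} ∧ b ∉ S \ {u}) (l.rotate i.val) :=
      hl.rotate i.val
    have hne' : l.rotate i.val ≠ [] := by
      simpa using hl.1
    have hhead : (l.rotate i.val).head hne' = u := by
      rw [← List.get_mk_zero (List.length_pos_iff.mpr hne'), List.get_rotate]
      have : (0 + i.val) % l.length = i.val := by
        simp [Nat.mod_eq_of_lt i.isLt]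
      simp only [this]
      convert hi using 2
    obtain ⟨t, hlt⟩ : ∃ t, l.rotate i.val = u :: t := by
      refine ⟨(l.rotate i.val).tail, ?_⟩
      rw [← hhead]
      exact (List.cons_head_tail hne').symm
    rw [hlt] at hl'
    obtain ⟨nd, hc, hlast⟩ := (isDicycle_iff_chain' _ _ (List.cons_ne_nil u t)).mp hl'
    have hut : u ∉ t := (List.nodup_cons.mp nd).1
    have hmemS : ∀ a ∈ t, a ∉ S := by
      intro a ha
      have hne : a ≠ u := fun h => hut (h ▸ ha)
      have h3 : a ∉ S \ {u} := by
        apply dicycle_mem_not_in hl'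
        exact List.mem_cons_of_mem _ ha
      intro haS
      exact h3 ⟨haS, hne⟩
    have htne : t ≠ [] := by
      intro h
      subst h
      simp only [List.getLast_singleton, List.head_cons] at hlast
      exact hu hlast.1
    have hlastget : (u :: t).getLast (List.cons_ne_nil u t) = t.getLast htne :=
      List.getLast_cons htne
    by_cases hvt : v ∈ t
    · -- v already on the cycle: shortcut the cycle to avoid u
      obtain ⟨t₁, t₂, ht12⟩ := List.append_of_mem hvt
      subst ht12
      have hnd_t : (t₁ ++ v :: t₂).Nodup := (List.nodup_cons.mp nd).2
      have hvt2 : v ∉ t₂ := by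
        have h4 := List.Nodup.of_append_right hnd_t
        exact (List.nodup_cons.mp h4).1
      have ht2ne : t₂ ≠ [] := by
        intro ht2
        subst ht2
        have h5 : (t₁ ++ [v]).getLast htne = v := List.getLast_append _
        rw [hlastget, h5] at hlast
        exact h2 hlast.1
      refine ⟨v :: t₂, (isDicycle_iff_chain' _ _ (List.cons_ne_nil v t₂)).mpr ⟨?_, ?_, ?_⟩⟩
      · -- Nodup
        have hsub : List.Sublist (v :: t₂) (u :: (t₁ ++ v :: t₂)) := by
          have : u :: (t₁ ++ v :: t₂) = (u :: t₁) ++ (v :: t₂) := by simp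
          rw [this]
          exact (List.suffix_append (u :: t₁) (v :: t₂)).sublist
        exact hsub.nodup nd
      · -- Chain'
        have hsuf : (v :: t₂) <:+ (u :: (t₁ ++ v :: t₂)) := by
          have : u :: (t₁ ++ v :: t₂) = (u :: t₁) ++ (v :: t₂) := by simp
          rw [this]
          exact List.suffix_append (u :: t₁) (v :: t₂)
        refine chain'_strengthen (hc.suffix hsuf) ?_
        intro a ha
        rcases List.mem_cons.mp ha with rfl | ha
        · exact hvS
        · exact hmemS a (List.mem_append_right _ (List.mem_cons_of_mem _ ha))
      · -- last edge
        have hw : (v :: t₂).getLast (List.cons_ne_nil v t₂) = t₂.getLast ht2ne :=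
          List.getLast_cons ht2ne
        have hw2 : (t₁ ++ v :: t₂).getLast htne = t₂.getLast ht2ne := by
          rw [List.getLast_append_of_ne_nil (h₂ := List.cons_ne_nil v t₂)]
          exact List.getLast_cons ht2ne
        have hwmem : t₂.getLast ht2ne ∈ t₂ := List.getLast_mem ht2ne
        have hwt : t₂.getLast ht2ne ∈ t₁ ++ v :: t₂ :=
          List.mem_append_right _ (List.mem_cons_of_mem _ hwmem)
        have hwu : t₂.getLast ht2ne ≠ u := fun h => hut (h ▸ hwt)
        have hwv : t₂.getLast ht2ne ≠ v := fun h => hvt2 (h ▸ hwmem)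
        have hEwu : E (t₂.getLast ht2ne) u := by
          rw [hlastget, hw2] at hlast
          exact hlast.1
        have hEwv : E (t₂.getLast ht2ne) v := ((htwin _ hwu hwv).1).mp hEwu
        rw [hw]
        simp only [List.head_cons]
        exact ⟨hEwv, hmemS _ hwt, hvS⟩
    · -- v not on the cycle: replace u by v
      refine ⟨v :: t, (isDicycle_iff_chain' _ _ (List.cons_ne_nil v t)).mpr ⟨?_, ?_, ?_⟩⟩
      · exact List.nodup_cons.mpr ⟨hvt, (List.nodup_cons.mp nd).2⟩
      · -- Chain'
        rw [List.Chain', List.isChain_cons]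
        obtain ⟨hhd, hct⟩ := List.isChain_cons.mp hc
        refine ⟨?_, chain'_strengthen hct hmemS⟩
        intro y hy
        have hyt : y ∈ t := List.mem_of_mem_head? hy
        have hyu : y ≠ u := fun h => hut (h ▸ hyt)
        have hyv : y ≠ v := fun h => hvt (h ▸ hyt)
        have hEuy : E u y := (hhd y hy).1
        exact ⟨((htwin y hyu hyv).2).mp hEuy, hvS, hmemS y hyt⟩
      · -- last edge
        have hw : (v :: t).getLast (List.cons_ne_nil v t) = t.getLast htne :=
          List.getLast_cons htne
        have hwt : t.getLast htne ∈ t := List.getLast_mem htne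
        have hwu : t.getLast htne ≠ u := fun h => hut (h ▸ hwt)
        have hwv : t.getLast htne ≠ v := fun h => hvt (h ▸ hwt)
        have hEwu : E (t.getLast htne) u := by rw [hlastget] at hlast; exact hlast.1
        have hEwv : E (t.getLast htne) v := ((htwin _ hwu hwv).1).mp hEwu
        rw [hw]
        simp only [List.head_cons]
        exact ⟨hEwv, hmemS _ hwt, hvS⟩
  · -- u not on the cycle: l itself works
    refine ⟨l, hl.1, hl.2.1, fun i => ?_⟩
    obtain ⟨hE, ha, hb⟩ := hl.2.2 i
    have hau : l.get i ≠ u := fun h => hul (h ▸ List.get_mem l _)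
    have hbu : l.get (cycNext l i) ≠ u := fun h => hul (h ▸ List.get_mem l _)
    exact ⟨hE, fun hs => ha ⟨hs, hau⟩, fun hs => hb ⟨hs, hbu⟩⟩
end

section
/- Let G be a finite directed graph containing distinct vertices u, m₁, …, m_k, v (k ≥ 1) with edges E u m₁, E m_i m_{i+1} for 1 ≤ i < k, E m_k v, and E u v, where each m_i has exactly one in-neighbor and exactly one out-neighbor in G. Then every directed cycle of G containing some m_i also contains u and v, with u and v non-consecutive on the cycle, so that (u, v) is a chord of it; consequently no chordless directed cycle of G contains any m_i. -/
/-- The index preceding `i` cyclically in the list `l`. -/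
def cycPrev (l : List V) (i : Fin l.length) : Fin l.length :=
  ⟨(i.val + l.length - 1) % l.length, Nat.mod_lt _ i.pos⟩

theorem cycNext_cycPrev (l : List V) (i : Fin l.length) : cycNext l (cycPrev l i) = i := by
  have hn : 0 < l.length := i.pos
  apply Fin.ext
  show ((i.val + l.length - 1) % l.length + 1) % l.length = i.val
  rw [Nat.mod_add_mod, Nat.sub_add_cancel (by omega), Nat.add_mod_right,
    Nat.mod_eq_of_lt i.isLt]

theorem chain_reduction {V : Type*} [Fintype V] (E : V → V → Prop)
    (u v : V) (huv : u ≠ v) (k : ℕ) (hk : 0 < k) (m : Fin k → V)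
    (hinj : Function.Injective m) (hmu : ∀ i, m i ≠ u) (hmv : ∀ i, m i ≠ v)
    (e1 : E u (m ⟨0, hk⟩))
    (e2 : ∀ i : Fin k, ∀ h : i.val + 1 < k, E (m i) (m ⟨i.val + 1, h⟩))
    (e3 : E (m ⟨k - 1, Nat.sub_lt hk one_pos⟩) v)
    (e4 : E u v)
    (hdeg : ∀ i : Fin k, (∃! x, E x (m i)) ∧ (∃! x, E (m i) x)) :
    (∀ l : List V, IsDicycle E l → (∃ i, m i ∈ l) → IsChord E l u v) ∧
    (∀ l : List V, IsChordlessDicycle E l → ∀ i, m i ∉ l) := by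
  have main : ∀ l : List V, IsDicycle E l → (∃ i, m i ∈ l) → IsChord E l u v := by
    intro l hl hml
    obtain ⟨hne, hnd, hedge⟩ := hl
    have hpred : ∀ j : Fin l.length, E (l.get (cycPrev l j)) (l.get j) := by
      intro j
      have h := hedge (cycPrev l j)
      rwa [cycNext_cycPrev] at h
    have inpred : ∀ x y : V, (∃! z, E z x) → E y x → x ∈ l →
        ∃ j : Fin l.length, l.get j = x ∧ l.get (cycPrev l j) = y := by
      intro x y hux hy hx
      obtain ⟨j, hj⟩ := List.mem_iff_get.mp hx
      refine ⟨j, hj, ?_⟩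
      obtain ⟨z, _, huniq⟩ := hux
      have h1 : l.get (cycPrev l j) = z := huniq _ (hj ▸ hpred j)
      have h2 : y = z := huniq _ hy
      rw [h1, h2]
    have outsucc : ∀ x y : V, (∃! z, E x z) → E x y → x ∈ l →
        ∃ j : Fin l.length, l.get j = x ∧ l.get (cycNext l j) = y := by
      intro x y hux hy hx
      obtain ⟨j, hj⟩ := List.mem_iff_get.mp hx
      refine ⟨j, hj, ?_⟩
      obtain ⟨z, _, huniq⟩ := hux
      have h1 : l.get (cycNext l j) = z := huniq _ (hj ▸ hedge j)
      have h2 : y = z := huniq _ hy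
      rw [h1, h2]
    have step_down : ∀ (t : ℕ) (h : t + 1 < k), m ⟨t + 1, h⟩ ∈ l →
        m ⟨t, by omega⟩ ∈ l := by
      intro t h hm
      obtain ⟨j, _, hpj⟩ := inpred (m ⟨t + 1, h⟩) (m ⟨t, by omega⟩)
        (hdeg ⟨t + 1, h⟩).1 (e2 ⟨t, by omega⟩ h) hm
      exact hpj ▸ List.get_mem l _
    have step_up : ∀ (t : ℕ) (h : t + 1 < k), m ⟨t, by omega⟩ ∈ l →
        m ⟨t + 1, h⟩ ∈ l := by
      intro t h hm
      obtain ⟨j, _, hsj⟩ := outsucc (m ⟨t, by omega⟩) (m ⟨t + 1, h⟩)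
        (hdeg ⟨t, by omega⟩).2 (e2 ⟨t, by omega⟩ h) hm
      exact hsj ▸ List.get_mem l _
    have down : ∀ (t : ℕ) (h : t < k), m ⟨t, h⟩ ∈ l → m ⟨0, hk⟩ ∈ l := by
      intro t
      induction t with
      | zero => intro h hm; exact hm
      | succ t ih => intro h hm; exact ih (by omega) (step_down t h hm)
    have up : ∀ (d t : ℕ) (h : t < k), k - 1 - t = d → m ⟨t, h⟩ ∈ l →
        m ⟨k - 1, Nat.sub_lt hk one_pos⟩ ∈ l := by
      intro d
      induction d with
      | zero =>
        intro t h he hm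
        have ht : t = k - 1 := by omega
        subst ht
        exact hm
      | succ d ih =>
        intro t h he hm
        have h1 : t + 1 < k := by omega
        exact ih (t + 1) h1 (by omega) (step_up t h1 hm)
    obtain ⟨i, hmi⟩ := hml
    have hm0 : m ⟨0, hk⟩ ∈ l := down i.val i.isLt hmi
    have hmk : m ⟨k - 1, Nat.sub_lt hk one_pos⟩ ∈ l :=
      up (k - 1 - i.val) i.val i.isLt rfl hmi
    obtain ⟨j0, hj0, hpj0⟩ := inpred (m ⟨0, hk⟩) u (hdeg ⟨0, hk⟩).1 e1 hm0
    obtain ⟨jk, hjk, hsjk⟩ := outsucc (m ⟨k - 1, Nat.sub_lt hk one_pos⟩) v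
      (hdeg ⟨k - 1, Nat.sub_lt hk one_pos⟩).2 e3 hmk
    refine ⟨hpj0 ▸ List.get_mem l _, hsjk ▸ List.get_mem l _, e4, ?_⟩
    rintro j ⟨hju, hjv⟩
    have hginj : Function.Injective l.get := List.nodup_iff_injective_get.mp hnd
    have hjp : j = cycPrev l j0 := hginj (hju.trans hpj0.symm)
    rw [hjp, cycNext_cycPrev, hj0] at hjv
    exact hmv ⟨0, hk⟩ hjv
  exact ⟨main, fun l hl i hm => hl.2 u v (main l hl.1 ⟨i, hm⟩)⟩
end

section
/- Let G be a strongly connected finite directed graph on at least two vertices, and let v be a vertex such that every vertex other than v has exactly one in-neighbor. Then every directed cycle of G passes through v. -/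
theorem all_cycles_through_high_in_degree_vertex {V : Type*} [Fintype V]
    (E : V → V → Prop) (v : V) (hcard : 2 ≤ Fintype.card V)
    (hsc : ∀ x y : V, Relation.ReflTransGen E x y)
    (hdeg : ∀ w, w ≠ v → ∃! x, E x w) :
    ∀ l : List V, IsDicycle E l → v ∈ l := by
  intro l hl
  obtain ⟨hne, _hnd, hedge⟩ := hl
  by_contra hv
  -- every vertex of l has an in-neighbor inside l
  have hpred : ∀ y, y ∈ l → ∃ p, p ∈ l ∧ E p y := by
    intro y hy
    obtain ⟨j, hj⟩ := List.get_of_mem hy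
    have hnpos : 0 < l.length := j.pos
    refine ⟨l.get ⟨(j.val + l.length - 1) % l.length, Nat.mod_lt _ hnpos⟩, List.get_mem _ _, ?_⟩
    have hcyc : cycNext l ⟨(j.val + l.length - 1) % l.length, Nat.mod_lt _ hnpos⟩ = j := by
      apply Fin.ext
      show ((j.val + l.length - 1) % l.length + 1) % l.length = j.val
      rw [Nat.mod_add_mod]
      have : j.val + l.length - 1 + 1 = j.val + l.length := by omega
      rw [this, Nat.add_mod_right, Nat.mod_eq_of_lt j.isLt]
    have := hedge ⟨(j.val + l.length - 1) % l.length, Nat.mod_lt _ hnpos⟩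
    rwa [hcyc, hj] at this
  -- anything reachable from v is not in l
  have hreach : ∀ y, Relation.ReflTransGen E v y → y ∉ l := by
    intro y hy
    induction hy with
    | refl => exact hv
    | tail _ hxy ih =>
      rename_i x y' _
      intro hyl
      have hyv : y' ≠ v := fun h => hv (h ▸ hyl)
      obtain ⟨u, _, huniq⟩ := hdeg y' hyv
      obtain ⟨p, hpl, hpe⟩ := hpred y' hyl
      have := (huniq p hpe).trans (huniq x hxy).symm
      exact ih (this ▸ hpl)
  obtain ⟨w, hw⟩ := List.exists_mem_of_ne_nil l hne
  exact hreach w (hsc v w) hw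
end

section
/- Let G be a finite directed graph with an edge E u v, and let a, b be vertices with a, b ∉ {u, v} such that every undirected path from a to b in the underlying undirected graph passes through u or through v. Then every directed cycle of G containing both a and b contains u and v non-consecutively (in particular (u, v) is a chord of it); consequently no chordless directed cycle of G contains both a and b. -/
theorem edge_separator_chord {V : Type*} [Fintype V] (E : V → V → Prop)
    (u v a b : V) (he : E u v)
    (hau : a ≠ u) (hav : a ≠ v) (hbu : b ≠ u) (hbv : b ≠ v)
    (hsep : ¬ Relation.ReflTransGen
      (fun x y => (E x y ∨ E y x) ∧ x ≠ u ∧ x ≠ v ∧ y ≠ u ∧ y ≠ v) a b) :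
    (∀ l : List V, IsDicycle E l → a ∈ l → b ∈ l →
      u ∈ l ∧ v ∈ l ∧
      (∀ i : Fin l.length, ¬(l.get i = u ∧ l.get (cycNext l i) = v)) ∧
      (∀ i : Fin l.length, ¬(l.get i = v ∧ l.get (cycNext l i) = u)) ∧
      IsChord E l u v) ∧
    (∀ l : List V, IsChordlessDicycle E l → ¬(a ∈ l ∧ b ∈ l)) := by
  set R : V → V → Prop :=
    fun x y => (E x y ∨ E y x) ∧ x ≠ u ∧ x ≠ v ∧ y ≠ u ∧ y ≠ v with hRdef
  have hsymm : ∀ {x y}, R x y → R y x := by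
    rintro x y ⟨h, h1, h2, h3, h4⟩
    exact ⟨h.symm, h3, h4, h1, h2⟩
  have hab : a ≠ b := by rintro rfl; exact hsep Relation.ReflTransGen.refl
  have hsepba : ¬ Relation.ReflTransGen R b a := fun h =>
    hsep ((@Relation.ReflTransGen.symmetric _ _ ⟨fun _ _ hr => hsymm hr⟩).symm _ _ h)
  have key : ∀ l : List V, IsDicycle E l → a ∈ l → b ∈ l →
      u ∈ l ∧ v ∈ l ∧
      (∀ i : Fin l.length, ¬(l.get i = u ∧ l.get (cycNext l i) = v)) ∧
      (∀ i : Fin l.length, ¬(l.get i = v ∧ l.get (cycNext l i) = u)) ∧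
      IsChord E l u v := by
    rintro l ⟨hne, hnd, hcyc⟩ hal hbl
    set n := l.length with hnl
    have hn : 0 < n := List.length_pos_iff.mpr hne
    obtain ⟨ia, hia⟩ := List.get_of_mem hal
    obtain ⟨ib, hib⟩ := List.get_of_mem hbl
    have getInj : Function.Injective l.get := List.nodup_iff_injective_get.mp hnd
    set gm : ℕ → V := fun k => l.get ⟨k % n, Nat.mod_lt _ hn⟩ with hgm
    have gm_congr : ∀ j k : ℕ, j % n = k % n → gm j = gm k := by
      intro j k h
      show l.get _ = l.get _
      congr 1
      exact Fin.ext h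
    have gm_inj : ∀ j k : ℕ, gm j = gm k → j % n = k % n := by
      intro j k h
      exact congrArg Fin.val (getInj h)
    have gm_mem : ∀ k : ℕ, gm k ∈ l := fun k => List.get_mem l _
    have gmE : ∀ k : ℕ, E (gm k) (gm (k + 1)) := by
      intro k
      have h := hcyc ⟨k % n, Nat.mod_lt _ hn⟩
      have hc : cycNext l ⟨k % n, Nat.mod_lt _ hn⟩ = ⟨(k + 1) % n, Nat.mod_lt _ hn⟩ :=
        Fin.ext (Nat.mod_add_mod k n 1)
      rw [hc] at h
      exact h
    have walk : ∀ m i : ℕ, (∀ t, t ≤ m → gm (i + t) ≠ u ∧ gm (i + t) ≠ v) →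
        Relation.ReflTransGen R (gm i) (gm (i + m)) := by
      intro m
      induction m with
      | zero => intro i _; exact Relation.ReflTransGen.refl
      | succ m ih =>
        intro i h
        have h0 := h 0 (by omega)
        have h1 := h 1 (by omega)
        have step : R (gm i) (gm (i + 1)) := ⟨Or.inl (gmE i), h0.1, h0.2, h1.1, h1.2⟩
        have tail := ih (i + 1) (fun t ht => by
          have := h (t + 1) (by omega)
          rwa [show i + (t + 1) = i + 1 + t by omega] at this)
        rw [show i + (m + 1) = i + 1 + m by omega]
        exact Relation.ReflTransGen.head step tail
    set x := ia.val with hx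
    set y := ib.val with hy
    have hxn : x < n := ia.isLt
    have hyn : y < n := ib.isLt
    have hxy : x ≠ y := by
      intro h
      exact hab (by rw [← hia, ← hib, Fin.ext h])
    have hga : gm x = a := by
      rw [← hia]; show l.get _ = l.get _; congr 1; exact Fin.ext (Nat.mod_eq_of_lt hxn)
    have hgb : gm y = b := by
      rw [← hib]; show l.get _ = l.get _; congr 1; exact Fin.ext (Nat.mod_eq_of_lt hyn)
    obtain ⟨d1, hd1, hd1pos, hd1lt⟩ :
        ∃ d, (x + d = y ∨ x + d = y + n) ∧ 0 < d ∧ d < n := by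
      rcases Nat.lt_or_ge x y with h | h
      · exact ⟨y - x, Or.inl (by omega), by omega, by omega⟩
      · exact ⟨y + n - x, Or.inr (by omega), by omega, by omega⟩
    set d2 := n - d1 with hd2def
    have hd2 : y + d2 = x ∨ y + d2 = x + n := by omega
    have hd2pos : 0 < d2 := by omega
    have hdsum : d1 + d2 = n := by omega
    have keyY : ∀ w : ℕ, (y + w) % n = (x + (d1 + w)) % n := by
      intro w
      rcases hd1 with h | h
      · rw [show x + (d1 + w) = y + w by omega]
      · rw [show x + (d1 + w) = (y + w) + n by omega, Nat.add_mod_right]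
    have keyX : ∀ w : ℕ, (x + w) % n = (y + (d2 + w)) % n := by
      intro w
      rcases hd2 with h | h
      · rw [show y + (d2 + w) = x + w by omega]
      · rw [show y + (d2 + w) = (x + w) + n by omega, Nat.add_mod_right]
    have cancel : ∀ z p q : ℕ, p < n → q < n → (z + p) % n = (z + q) % n → p = q := by
      intro z p q hp hq h
      have h2 : p ≡ q [MOD n] := Nat.ModEq.add_left_cancel' z h
      have h3 : p % n = q % n := h2
      rwa [Nat.mod_eq_of_lt hp, Nat.mod_eq_of_lt hq] at h3
    have hgxd : gm (x + d1) = b := by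
      rw [← hgb]
      apply gm_congr
      have := keyY 0
      simpa using this.symm
    -- extract t on arc a -> b
    obtain ⟨t, htle, htval⟩ : ∃ t, t ≤ d1 ∧ (gm (x + t) = u ∨ gm (x + t) = v) := by
      by_contra hcon
      push_neg at hcon
      exact hsep (by rw [← hga, ← hgxd]; exact walk d1 x hcon)
    have ht0 : t ≠ 0 := by
      rintro rfl
      simp only [Nat.add_zero] at htval
      rw [hga] at htval
      rcases htval with h | h
      exacts [hau h, hav h]
    have htd : t ≠ d1 := by
      rintro rfl
      rw [hgxd] at htval
      rcases htval with h | h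
      exacts [hbu h, hbv h]
    -- extract s on arc b -> a
    have hgyd : gm (y + d2) = a := by
      rw [← hga]
      apply gm_congr
      have := keyX 0
      simpa using this.symm
    obtain ⟨s, hsle, hsval⟩ : ∃ s, s ≤ d2 ∧ (gm (y + s) = u ∨ gm (y + s) = v) := by
      by_contra hcon
      push_neg at hcon
      exact hsepba (by rw [← hgb, ← hgyd]; exact walk d2 y hcon)
    have hs0 : s ≠ 0 := by
      rintro rfl
      simp only [Nat.add_zero] at hsval
      rw [hgb] at hsval
      rcases hsval with h | h
      exacts [hbu h, hbv h]
    have hsd : s ≠ d2 := by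
      rintro rfl
      rw [hgyd] at hsval
      rcases hsval with h | h
      exacts [hau h, hav h]
    have htlt : t < d1 := lt_of_le_of_ne htle htd
    have hslt : s < d2 := lt_of_le_of_ne hsle hsd
    -- index inequalities
    have I1 : (x + t) % n ≠ (y + s) % n := by
      intro h
      rw [keyY s] at h
      have := cancel x t (d1 + s) (by omega) (by omega) h
      omega
    have I2 : (x + t + 1) % n ≠ (y + s) % n := by
      intro h
      rw [keyY s, show x + t + 1 = x + (t + 1) by omega] at h
      have := cancel x (t + 1) (d1 + s) (by omega) (by omega) h
      omega
    have I3 : (y + s + 1) % n ≠ (x + t) % n := by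
      intro h
      rw [keyX t, show y + s + 1 = y + (s + 1) by omega] at h
      have := cancel y (s + 1) (d2 + t) (by omega) (by omega) h
      omega
    have hne12 : gm (x + t) ≠ gm (y + s) := fun h => I1 (gm_inj _ _ h)
    have scenario : (gm (x + t) = u ∧ gm (y + s) = v) ∨
        (gm (x + t) = v ∧ gm (y + s) = u) := by
      rcases htval with h1 | h1 <;> rcases hsval with h2 | h2
      · exact absurd (h1.trans h2.symm) hne12
      · exact Or.inl ⟨h1, h2⟩
      · exact Or.inr ⟨h1, h2⟩
      · exact absurd (h1.trans h2.symm) hne12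
    have humem : u ∈ l := by
      rcases scenario with ⟨h, _⟩ | ⟨_, h⟩
      exacts [h ▸ gm_mem (x + t), h ▸ gm_mem (y + s)]
    have hvmem : v ∈ l := by
      rcases scenario with ⟨_, h⟩ | ⟨h, _⟩
      exacts [h ▸ gm_mem (y + s), h ▸ gm_mem (x + t)]
    have step_eq : ∀ (i : Fin l.length) (p q : ℕ), i.val % n = p % n →
        (i.val + 1) % n = q % n → (p + 1) % n = q % n := by
      intro i p q h1 h2
      rw [← Nat.mod_add_mod, ← h1, Nat.mod_add_mod, h2]
    have getgm : ∀ i : Fin l.length, l.get i = gm i.val := by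
      intro i
      show l.get _ = l.get _
      congr 1
      exact Fin.ext (Nat.mod_eq_of_lt i.isLt).symm
    have nextgm : ∀ i : Fin l.length, l.get (cycNext l i) = gm (i.val + 1) := by
      intro i; rfl
    have nc1 : ∀ i : Fin l.length, ¬(l.get i = u ∧ l.get (cycNext l i) = v) := by
      rintro i ⟨hgu, hgv⟩
      rw [getgm] at hgu
      rw [nextgm] at hgv
      rcases scenario with ⟨hA1, hA2⟩ | ⟨hB1, hB2⟩
      · exact I2 (step_eq i (x + t) (y + s) (gm_inj _ _ (hgu.trans hA1.symm))
          (gm_inj _ _ (hgv.trans hA2.symm)))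
      · exact I3 (step_eq i (y + s) (x + t) (gm_inj _ _ (hgu.trans hB2.symm))
          (gm_inj _ _ (hgv.trans hB1.symm)))
    have nc2 : ∀ i : Fin l.length, ¬(l.get i = v ∧ l.get (cycNext l i) = u) := by
      rintro i ⟨hgv, hgu⟩
      rw [getgm] at hgv
      rw [nextgm] at hgu
      rcases scenario with ⟨hA1, hA2⟩ | ⟨hB1, hB2⟩
      · exact I3 (step_eq i (y + s) (x + t) (gm_inj _ _ (hgv.trans hA2.symm))
          (gm_inj _ _ (hgu.trans hA1.symm)))
      · exact I2 (step_eq i (x + t) (y + s) (gm_inj _ _ (hgv.trans hB1.symm))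
          (gm_inj _ _ (hgu.trans hB2.symm)))
    exact ⟨humem, hvmem, nc1, nc2, humem, hvmem, he, nc1⟩
  refine ⟨key, ?_⟩
  rintro l ⟨hdc, hnc⟩ ⟨ha, hb⟩
  exact hnc u v (key l hdc ha hb).2.2.2.2
end

section
/- Let G be a finite simple graph and v a simplicial vertex, i.e., a vertex whose neighborhood N(v) forms a clique (any two distinct neighbors of v are adjacent). Then there exists a minimum vertex cover of G that contains all of N(v) and does not contain v. -/
/-- `S` is a vertex cover of the simple graph `G`: every edge has an endpoint in `S`. -/
def IsVertexCover {V : Type*} (G : SimpleGraph V) (S : Set V) : Prop :=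
  ∀ ⦃x y : V⦄, G.Adj x y → x ∈ S ∨ y ∈ S

theorem simplicial_vertex_cover {V : Type*} [Fintype V] (G : SimpleGraph V)
    (v : V) (hsimp : ∀ x y, G.Adj v x → G.Adj v y → x ≠ y → G.Adj x y) :
    ∃ S : Finset V, IsVertexCover G ↑S ∧ (∀ w, G.Adj v w → w ∈ S) ∧ v ∉ S ∧
      ∀ T : Finset V, IsVertexCover G ↑T → S.card ≤ T.card := by
  classical
  obtain ⟨T, hTmem, hTmin⟩ := Finset.exists_min_image
    ((Finset.univ : Finset V).powerset.filter (fun T : Finset V => IsVertexCover G ↑T))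
    Finset.card ⟨Finset.univ, Finset.mem_filter.mpr ⟨Finset.mem_powerset.mpr (Finset.Subset.refl _),
      fun x y _ => Or.inl (by simp)⟩⟩
  have hT : IsVertexCover G ↑T := (Finset.mem_filter.mp hTmem).2
  set N : Finset V := Finset.univ.filter (G.Adj v) with hN
  have hvN : v ∉ N := by simp [hN]
  set S : Finset V := T.erase v ∪ N with hS
  have hcover : IsVertexCover G ↑S := by
    intro x y hxy
    by_cases hx : x = v
    · right; simp only [hS, Finset.coe_union, Set.mem_union]
      right; simp [hN, ← hx, hxy]
    by_cases hy : y = v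
    · left; simp only [hS, Finset.coe_union, Set.mem_union]
      right; simp [hN, ← hy, hxy.symm]
    rcases hT hxy with h | h
    · left; simp only [hS, Finset.coe_union, Set.mem_union]
      left; simp only [Finset.coe_erase, Set.mem_diff, Set.mem_singleton_iff]; exact ⟨h, hx⟩
    · right; simp only [hS, Finset.coe_union, Set.mem_union]
      left; simp only [Finset.coe_erase, Set.mem_diff, Set.mem_singleton_iff]; exact ⟨h, hy⟩
  have hsdiff : N \ T.erase v = N \ T := by
    ext w
    simp only [Finset.mem_sdiff, Finset.mem_erase, hN, Finset.mem_filter, Finset.mem_univ,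
      true_and]
    constructor
    · rintro ⟨hw, h⟩
      refine ⟨hw, fun hwT => h ⟨fun he => G.loopless.irrefl v (he ▸ hw), hwT⟩⟩
    · rintro ⟨hw, h⟩
      exact ⟨hw, fun h' => h h'.2⟩
  have hNT1 : (N \ T).card ≤ 1 := by
    rw [Finset.card_le_one]
    intro a ha b hb
    by_contra hab
    simp only [Finset.mem_sdiff, hN, Finset.mem_filter, Finset.mem_univ, true_and] at ha hb
    rcases hT (hsimp a b ha.1 hb.1 hab) with h | h
    · exact ha.2 h
    · exact hb.2 h
  have hcard : S.card ≤ T.card := by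
    have h1 : S.card = (T.erase v).card + (N \ T).card := by
      rw [hS, Finset.union_comm, ← hsdiff, ← Finset.card_sdiff_add_card, Nat.add_comm]
    by_cases hvT : v ∈ T
    · have h2 : (T.erase v).card = T.card - 1 := Finset.card_erase_of_mem hvT
      have h3 : 1 ≤ T.card := Finset.card_pos.mpr ⟨v, hvT⟩
      omega
    · have h2 : T.erase v = T := Finset.erase_eq_of_notMem hvT
      have h3 : N \ T = ∅ := by
        ext w
        simp only [Finset.mem_sdiff, hN, Finset.mem_filter, Finset.mem_univ, true_and,
          Finset.notMem_empty, iff_false, not_and, not_not]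
        intro hw
        rcases hT hw with h | h
        · exact absurd h hvT
        · exact h
      rw [h1, h2, h3]
      simp
  refine ⟨S, hcover, ?_, ?_, ?_⟩
  · intro w hw
    simp only [hS, Finset.mem_union]
    right; simp [hN, hw]
  · simp only [hS, Finset.mem_union, not_or]
    exact ⟨fun h => (Finset.mem_erase.mp h).1 rfl, hvN⟩
  · intro T' hT'
    refine hcard.trans (hTmin T' ?_)
    simp [hT']
end

section
/- Let G be a finite simple graph with adjacent vertices u and v such that v dominates u, meaning every neighbor of u other than v is also a neighbor of v (N(u) ⊆ N(v) ∪ {v}). Then there exists a minimum vertex cover of G containing v. -/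
theorem dominated_vertex_cover {V : Type*} [Fintype V] (G : SimpleGraph V)
    (u v : V) (hadj : G.Adj u v)
    (hdom : ∀ w, G.Adj u w → w ≠ v → G.Adj v w) :
    ∃ S : Finset V, IsVertexCover G ↑S ∧ v ∈ S ∧
      ∀ T : Finset V, IsVertexCover G ↑T → S.card ≤ T.card := by
  classical
  -- there exists some cover, namely univ
  have h0 : ∃ n : ℕ, ∃ T : Finset V, IsVertexCover G ↑T ∧ T.card = n :=
    ⟨(Finset.univ : Finset V).card, Finset.univ, fun x y _ => Or.inl (by simp), rfl⟩
  obtain ⟨T, hT, hTcard⟩ := Nat.find_spec h0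
  have hmin : ∀ T' : Finset V, IsVertexCover G ↑T' → T.card ≤ T'.card := by
    intro T' hT'
    rw [hTcard]
    exact Nat.find_min' h0 ⟨T', hT', rfl⟩
  by_cases hv : v ∈ T
  · exact ⟨T, hT, hv, hmin⟩
  · have hu : u ∈ T := by
      rcases hT hadj with h | h
      · exact h
      · exact absurd h hv
    refine ⟨insert v (T.erase u), ?_, Finset.mem_insert_self v _, ?_⟩
    · intro x y hxy
      rcases hT hxy with hx | hy
      · by_cases hxu : x = u
        · by_cases hyv : y = v
          · exact Or.inr (by simp [hyv])
          · -- edge v-y, covered by T, v ∉ T, so y ∈ T; also y ≠ u since G.Adj u y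
            have hvy : G.Adj v y := hdom y (hxu ▸ hxy) hyv
            have hy : y ∈ T := by
              rcases hT hvy with h | h
              · exact absurd h hv
              · exact h
            have hyu : y ≠ u := fun h => (G.ne_of_adj hxy) (hxu.trans h.symm)
            exact Or.inr (by simp [Finset.mem_insert, Finset.mem_erase, hyu, hy])
        · exact Or.inl (by simp [Finset.mem_insert, Finset.mem_erase, hxu, hx])
      · by_cases hyu : y = u
        · have hxy' := hxy.symm
          by_cases hxv : x = v
          · exact Or.inl (by simp [hxv])
          · have hvx : G.Adj v x := hdom x (hyu ▸ hxy') hxv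
            have hx : x ∈ T := by
              rcases hT hvx with h | h
              · exact absurd h hv
              · exact h
            have hxu : x ≠ u := fun h => (G.ne_of_adj hxy') (hyu.trans h.symm)
            exact Or.inl (by simp [Finset.mem_insert, Finset.mem_erase, hxu, hx])
        · exact Or.inr (by simp [Finset.mem_insert, Finset.mem_erase, hyu, hy])
    · intro T' hT'
      have hvT : v ∉ T.erase u := fun h => hv (Finset.mem_of_mem_erase h)
      calc (insert v (T.erase u)).card = (T.erase u).card + 1 :=
            Finset.card_insert_of_notMem hvT
        _ = T.card := Finset.card_erase_add_one hu
        _ ≤ T'.card := hmin T' hT'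
end

section
/- Let G be a finite simple graph in which distinct vertices (a, b, c, d) form a generalized desk: they induce a 4-cycle (edges ab, bc, cd, da are present and edges ac, bd are absent), each of a, b, c, d has degree at least 3, |N(a) ∪ N(c)| ≤ 4, |N(b) \ N(d)| ≤ 1, and |N(d) \ N(b)| ≤ 1. Then {a, c} and {b, d} are alternative sets: there exists a minimum vertex cover S of G such that either {a, c} ⊆ S and S ∩ {b, d} = ∅, or {b, d} ⊆ S and S ∩ {a, c} = ∅. -/
open Finset

/-- Surgery on a vertex cover: remove `R`, add `A`; it stays a cover provided every
neighbor of each removed vertex lies in the new set. -/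
lemma cover_surgery {V : Type*} [DecidableEq V] {G : SimpleGraph V}
    {T R A : Finset V} (hT : IsVertexCover G ↑T)
    (hR : ∀ r ∈ R, ∀ y, G.Adj r y → y ∈ (T \ R) ∪ A) :
    IsVertexCover G ↑((T \ R) ∪ A) := by
  intro x y hxy
  rcases hT hxy with hx | hy
  · by_cases hxR : x ∈ R
    · exact Or.inr (by exact_mod_cast hR x hxR y hxy)
    · left
      simp only [coe_union, Set.mem_union, coe_sdiff, Set.mem_diff, mem_coe]
      exact Or.inl ⟨hx, hxR⟩
  · by_cases hyR : y ∈ R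
    · exact Or.inl (by exact_mod_cast hR y hyR x hxy.symm)
    · right
      simp only [coe_union, Set.mem_union, coe_sdiff, Set.mem_diff, mem_coe]
      exact Or.inl ⟨hy, hyR⟩

theorem generalized_desk_alternative {V : Type*} [Fintype V] [DecidableEq V]
    (G : SimpleGraph V) [DecidableRel G.Adj]
    (a b c d : V) (hnd : ([a, b, c, d] : List V).Nodup)
    (hab : G.Adj a b) (hbc : G.Adj b c) (hcd : G.Adj c d) (hda : G.Adj d a)
    (hac : ¬ G.Adj a c) (hbd : ¬ G.Adj b d)
    (hdega : 3 ≤ G.degree a) (hdegb : 3 ≤ G.degree b)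
    (hdegc : 3 ≤ G.degree c) (hdegd : 3 ≤ G.degree d)
    (hNac : (G.neighborFinset a ∪ G.neighborFinset c).card ≤ 4)
    (hNbd : (G.neighborFinset b \ G.neighborFinset d).card ≤ 1)
    (hNdb : (G.neighborFinset d \ G.neighborFinset b).card ≤ 1) :
    ∃ S : Finset V, IsVertexCover G ↑S ∧
      (∀ T : Finset V, IsVertexCover G ↑T → S.card ≤ T.card) ∧
      ((a ∈ S ∧ c ∈ S ∧ b ∉ S ∧ d ∉ S) ∨ (b ∈ S ∧ d ∈ S ∧ a ∉ S ∧ c ∉ S)) := by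
  classical
  simp only [List.nodup_cons, List.mem_cons, List.mem_singleton, List.not_mem_nil,
    or_false, not_or, List.nodup_nil, and_true] at hnd
  obtain ⟨⟨hab', hac', had'⟩, ⟨hbc', hbd'⟩, hcd', -⟩ := hnd
  set Na := G.neighborFinset a with hNa
  set Nb := G.neighborFinset b with hNb
  set Nc := G.neighborFinset c with hNc
  set Nd := G.neighborFinset d with hNd
  have mem_Na : ∀ x, x ∈ Na ↔ G.Adj a x := fun x => SimpleGraph.mem_neighborFinset ..
  have mem_Nb : ∀ x, x ∈ Nb ↔ G.Adj b x := fun x => SimpleGraph.mem_neighborFinset ..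
  have mem_Nc : ∀ x, x ∈ Nc ↔ G.Adj c x := fun x => SimpleGraph.mem_neighborFinset ..
  have mem_Nd : ∀ x, x ∈ Nd ↔ G.Adj d x := fun x => SimpleGraph.mem_neighborFinset ..
  -- existence of a minimum vertex cover
  obtain ⟨T, hTmem, hTmin⟩ := Finset.exists_min_image
    (Finset.univ.filter fun S : Finset V => IsVertexCover G ↑S) Finset.card
    ⟨Finset.univ, by
      simp only [mem_filter, mem_univ, true_and]
      intro x y _; left; simp⟩
  have hT : IsVertexCover G ↑T := (Finset.mem_filter.mp hTmem).2
  have hTle : ∀ T' : Finset V, IsVertexCover G ↑T' → T.card ≤ T'.card := fun T' h =>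
    hTmin T' (Finset.mem_filter.mpr ⟨Finset.mem_univ _, h⟩)
  -- the set E of external neighbors of a and c
  set E : Finset V := (Na ∪ Nc) \ {b, d} with hE
  have hbdsub : ({b, d} : Finset V) ⊆ Na ∪ Nc := by
    intro x hx
    simp only [mem_insert, mem_singleton] at hx
    rcases hx with rfl | rfl
    · exact mem_union_left _ ((mem_Na _).mpr hab)
    · exact mem_union_left _ ((mem_Na _).mpr hda.symm)
  have hcardbd : ({b, d} : Finset V).card = 2 := by
    rw [card_insert_of_notMem (by simpa using hbd'), card_singleton]
  have hEcard : E.card ≤ 2 := by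
    rw [hE, card_sdiff_of_subset hbdsub, hcardbd]
    omega
  have haE : a ∉ E := by
    simp only [hE, mem_sdiff, mem_union, mem_Na, mem_Nc, not_and_or]
    left
    push_neg
    exact ⟨fun h => absurd h (G.irrefl), fun h => absurd h.symm hac⟩
  have hcE : c ∉ E := by
    simp only [hE, mem_sdiff, mem_union, mem_Na, mem_Nc, not_and_or]
    left
    push_neg
    exact ⟨fun h => absurd h hac, fun h => absurd h (G.irrefl)⟩
  have hbE : b ∉ E := by simp [hE]
  have hdE : d ∉ E := by simp [hE]
  have hNaE : ∀ y, G.Adj a y → y = b ∨ y = d ∨ y ∈ E := by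
    intro y hy
    by_cases h1 : y = b
    · exact Or.inl h1
    by_cases h2 : y = d
    · exact Or.inr (Or.inl h2)
    refine Or.inr (Or.inr ?_)
    simp only [hE, mem_sdiff, mem_union, mem_Na, mem_insert, mem_singleton]
    exact ⟨Or.inl hy, by tauto⟩
  have hNcE : ∀ y, G.Adj c y → y = b ∨ y = d ∨ y ∈ E := by
    intro y hy
    by_cases h1 : y = b
    · exact Or.inl h1
    by_cases h2 : y = d
    · exact Or.inr (Or.inl h2)
    refine Or.inr (Or.inr ?_)
    simp only [hE, mem_sdiff, mem_union, mem_Na, mem_Nc, mem_insert, mem_singleton]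
    exact ⟨Or.inr hy, by tauto⟩
  by_cases hbT : b ∈ T
  · by_cases hdT : d ∈ T
    · -- b, d ∈ T : aim for the right branch
      by_cases haT : a ∈ T
      · by_cases hcT : c ∈ T
        · -- remove a and c, add E \ T
          have hacsub : ({a, c} : Finset V) ⊆ T := by
            intro x hx
            simp only [mem_insert, mem_singleton] at hx
            rcases hx with rfl | rfl <;> assumption
          have hbac : b ∉ ({a, c} : Finset V) := by
            simp only [mem_insert, mem_singleton, not_or]
            exact ⟨fun h => hab' h.symm, hbc'⟩
          have hdac : d ∉ ({a, c} : Finset V) := by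
            simp only [mem_insert, mem_singleton, not_or]
            exact ⟨fun h => had' h.symm, fun h => hcd' h.symm⟩
          refine ⟨(T \ {a, c}) ∪ (E \ T), ?_, ?_, ?_⟩
          · apply cover_surgery hT
            intro r hr y hy
            simp only [mem_insert, mem_singleton] at hr
            have hy' : y = b ∨ y = d ∨ y ∈ E := by
              rcases hr with rfl | rfl
              · exact hNaE y hy
              · exact hNcE y hy
            rw [mem_union, mem_sdiff]
            rcases hy' with rfl | rfl | hyE
            · exact Or.inl ⟨hbT, hbac⟩
            · exact Or.inl ⟨hdT, hdac⟩
            · by_cases hyT : y ∈ T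
              · refine Or.inl ⟨hyT, ?_⟩
                simp only [mem_insert, mem_singleton, not_or]
                constructor
                · rintro rfl; exact haE hyE
                · rintro rfl; exact hcE hyE
              · exact Or.inr (mem_sdiff.mpr ⟨hyE, hyT⟩)
          · intro T' hT'
            have h1 : ((T \ {a, c}) ∪ (E \ T)).card ≤ (T \ {a, c}).card + (E \ T).card :=
              card_union_le _ _
            have hcac : ({a, c} : Finset V).card = 2 := by
              rw [card_insert_of_notMem (by simpa using hac'), card_singleton]
            have h2 : (T \ {a, c}).card = T.card - 2 := by
              rw [card_sdiff_of_subset hacsub, hcac]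
            have h3 : (E \ T).card ≤ 2 := le_trans (card_le_card (sdiff_subset)) hEcard
            have h4 : 2 ≤ T.card := hcac ▸ card_le_card hacsub
            have h5 := hTle T' hT'
            omega
          · right
            have haS : a ∉ (T \ {a, c}) ∪ (E \ T) := by
              rw [mem_union, mem_sdiff, mem_sdiff]
              rintro (⟨-, h⟩ | ⟨h, -⟩)
              · exact h (by simp)
              · exact haE h
            have hcS : c ∉ (T \ {a, c}) ∪ (E \ T) := by
              rw [mem_union, mem_sdiff, mem_sdiff]
              rintro (⟨-, h⟩ | ⟨h, -⟩)
              · exact h (by simp)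
              · exact hcE h
            exact ⟨mem_union_left _ (mem_sdiff.mpr ⟨hbT, hbac⟩),
                   mem_union_left _ (mem_sdiff.mpr ⟨hdT, hdac⟩), haS, hcS⟩
        · -- a ∈ T, c ∉ T : remove a, add E \ T (which has ≤ 1 element)
          have hNcT : ∀ y, G.Adj c y → y ∈ T := by
            intro y hy
            rcases hT hy with h | h
            · exact absurd h hcT
            · exact h
          -- c has a neighbor e in E ∩ T
          obtain ⟨e, heNc, hebd⟩ : ∃ e, e ∈ Nc ∧ e ∉ ({b, d} : Finset V) := by
            have : 0 < (Nc \ {b, d}).card := by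
              have h1 : Nc.card ≤ (Nc \ {b, d}).card + ({b, d} : Finset V).card :=
                card_le_card_sdiff_add_card
              have h2 : 3 ≤ Nc.card := hdegc
              omega
            obtain ⟨e, he⟩ := card_pos.mp this
            exact ⟨e, (mem_sdiff.mp he).1, (mem_sdiff.mp he).2⟩
          have heE : e ∈ E := by
            simp only [hE, mem_sdiff, mem_union]
            exact ⟨Or.inr heNc, hebd⟩
          have heT : e ∈ T := hNcT e ((mem_Nc e).mp heNc)
          have hETcard : (E \ T).card ≤ 1 := by
            have hsub : E \ T ⊆ E \ {e} := by
              intro x hx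
              rw [mem_sdiff] at hx ⊢
              refine ⟨hx.1, ?_⟩
              simp only [mem_singleton]
              rintro rfl; exact hx.2 heT
            have h1 : (E \ {e}).card = E.card - 1 := by
              rw [card_sdiff_of_subset (singleton_subset_iff.mpr heE), card_singleton]
            have := card_le_card hsub
            omega
          refine ⟨(T \ {a}) ∪ (E \ T), ?_, ?_, ?_⟩
          · apply cover_surgery hT
            intro r hr y hy
            simp only [mem_singleton] at hr
            subst hr
            simp only [mem_union, mem_sdiff, mem_singleton]
            rcases hNaE y hy with rfl | rfl | hyE
            · exact Or.inl ⟨hbT, Ne.symm hab'⟩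
            · exact Or.inl ⟨hdT, Ne.symm had'⟩
            · by_cases hyT : y ∈ T
              · exact Or.inl ⟨hyT, by rintro rfl; exact haE hyE⟩
              · exact Or.inr ⟨hyE, hyT⟩
          · intro T' hT'
            have h1 : ((T \ {a}) ∪ (E \ T)).card ≤ (T \ {a}).card + (E \ T).card :=
              card_union_le _ _
            have h2 : (T \ {a}).card = T.card - 1 := by
              rw [card_sdiff_of_subset (singleton_subset_iff.mpr haT), card_singleton]
            have h4 : 1 ≤ T.card := card_pos.mpr ⟨a, haT⟩
            have h5 := hTle T' hT'
            omega
          · right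
            simp only [mem_union, mem_sdiff, mem_singleton]
            refine ⟨Or.inl ⟨hbT, Ne.symm hab'⟩, Or.inl ⟨hdT, Ne.symm had'⟩, ?_, ?_⟩
            · rintro (⟨-, h⟩ | ⟨h, -⟩)
              · exact h trivial
              · exact haE h
            · rintro (⟨h, -⟩ | ⟨h, -⟩)
              · exact hcT h
              · exact hcE h
      · by_cases hcT : c ∈ T
        · -- c ∈ T, a ∉ T : remove c, add E \ T (which has ≤ 1 element)
          have hNaT : ∀ y, G.Adj a y → y ∈ T := by
            intro y hy
            rcases hT hy with h | h
            · exact absurd h haT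
            · exact h
          obtain ⟨e, heNa, hebd⟩ : ∃ e, e ∈ Na ∧ e ∉ ({b, d} : Finset V) := by
            have : 0 < (Na \ {b, d}).card := by
              have h1 : Na.card ≤ (Na \ {b, d}).card + ({b, d} : Finset V).card :=
                card_le_card_sdiff_add_card
              have h2 : 3 ≤ Na.card := hdega
              omega
            obtain ⟨e, he⟩ := card_pos.mp this
            exact ⟨e, (mem_sdiff.mp he).1, (mem_sdiff.mp he).2⟩
          have heE : e ∈ E := by
            simp only [hE, mem_sdiff, mem_union]
            exact ⟨Or.inl heNa, hebd⟩
          have heT : e ∈ T := hNaT e ((mem_Na e).mp heNa)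
          have hETcard : (E \ T).card ≤ 1 := by
            have hsub : E \ T ⊆ E \ {e} := by
              intro x hx
              rw [mem_sdiff] at hx ⊢
              refine ⟨hx.1, ?_⟩
              simp only [mem_singleton]
              rintro rfl; exact hx.2 heT
            have h1 : (E \ {e}).card = E.card - 1 := by
              rw [card_sdiff_of_subset (singleton_subset_iff.mpr heE), card_singleton]
            have := card_le_card hsub
            omega
          refine ⟨(T \ {c}) ∪ (E \ T), ?_, ?_, ?_⟩
          · apply cover_surgery hT
            intro r hr y hy
            simp only [mem_singleton] at hr
            subst hr
            simp only [mem_union, mem_sdiff, mem_singleton]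
            rcases hNcE y hy with rfl | rfl | hyE
            · exact Or.inl ⟨hbT, hbc'⟩
            · exact Or.inl ⟨hdT, Ne.symm hcd'⟩
            · by_cases hyT : y ∈ T
              · exact Or.inl ⟨hyT, by rintro rfl; exact hcE hyE⟩
              · exact Or.inr ⟨hyE, hyT⟩
          · intro T' hT'
            have h1 : ((T \ {c}) ∪ (E \ T)).card ≤ (T \ {c}).card + (E \ T).card :=
              card_union_le _ _
            have h2 : (T \ {c}).card = T.card - 1 := by
              rw [card_sdiff_of_subset (singleton_subset_iff.mpr hcT), card_singleton]
            have h4 : 1 ≤ T.card := card_pos.mpr ⟨c, hcT⟩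
            have h5 := hTle T' hT'
            omega
          · right
            simp only [mem_union, mem_sdiff, mem_singleton]
            refine ⟨Or.inl ⟨hbT, hbc'⟩, Or.inl ⟨hdT, Ne.symm hcd'⟩, ?_, ?_⟩
            · rintro (⟨h, -⟩ | ⟨h, -⟩)
              · exact haT h
              · exact haE h
            · rintro (⟨-, h⟩ | ⟨h, -⟩)
              · exact h trivial
              · exact hcE h
        · -- a ∉ T, c ∉ T : T itself works
          exact ⟨T, hT, hTle, Or.inr ⟨hbT, hdT, haT, hcT⟩⟩
    · -- b ∈ T, d ∉ T : then N(d) ⊆ T, so a, c ∈ T; swap b out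
      have hNdT : ∀ y, G.Adj d y → y ∈ T := by
        intro y hy
        rcases hT hy with h | h
        · exact absurd h hdT
        · exact h
      have haT : a ∈ T := hNdT a hda
      have hcT : c ∈ T := hNdT c hcd.symm
      have hNdsubT : Nd ⊆ T := fun x hx => hNdT x ((mem_Nd x).mp hx)
      have hNbTcard : (Nb \ T).card ≤ 1 := by
        have : Nb \ T ⊆ Nb \ Nd := fun x hx => by
          rw [mem_sdiff] at hx ⊢
          exact ⟨hx.1, fun h => hx.2 (hNdsubT h)⟩
        exact le_trans (card_le_card this) hNbd
      refine ⟨(T \ {b}) ∪ (Nb \ T), ?_, ?_, ?_⟩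
      · apply cover_surgery hT
        intro r hr y hy
        simp only [mem_singleton] at hr
        subst hr
        simp only [mem_union, mem_sdiff, mem_singleton]
        by_cases hyT : y ∈ T
        · exact Or.inl ⟨hyT, by rintro rfl; exact G.irrefl hy⟩
        · exact Or.inr ⟨(mem_Nb y).mpr hy, hyT⟩
      · intro T' hT'
        have h1 : ((T \ {b}) ∪ (Nb \ T)).card ≤ (T \ {b}).card + (Nb \ T).card :=
          card_union_le _ _
        have h2 : (T \ {b}).card = T.card - 1 := by
          rw [card_sdiff_of_subset (singleton_subset_iff.mpr hbT), card_singleton]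
        have h4 : 1 ≤ T.card := card_pos.mpr ⟨b, hbT⟩
        have h5 := hTle T' hT'
        omega
      · left
        simp only [mem_union, mem_sdiff, mem_singleton]
        refine ⟨Or.inl ⟨haT, hab'⟩, Or.inl ⟨hcT, Ne.symm hbc'⟩, ?_, ?_⟩
        · rintro (⟨-, h⟩ | ⟨h, -⟩)
          · exact h trivial
          · exact G.irrefl ((mem_Nb b).mp h)
        · rintro (⟨h, -⟩ | ⟨h, -⟩)
          · exact hdT h
          · exact hbd ((mem_Nb d).mp h)
  · -- b ∉ T : then N(b) ⊆ T, so a, c ∈ T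
    have hNbT : ∀ y, G.Adj b y → y ∈ T := by
      intro y hy
      rcases hT hy with h | h
      · exact absurd h hbT
      · exact h
    have haT : a ∈ T := hNbT a hab.symm
    have hcT : c ∈ T := hNbT c hbc
    have hNbsubT : Nb ⊆ T := fun x hx => hNbT x ((mem_Nb x).mp hx)
    by_cases hdT : d ∈ T
    · -- swap d out
      have hNdTcard : (Nd \ T).card ≤ 1 := by
        have : Nd \ T ⊆ Nd \ Nb := fun x hx => by
          rw [mem_sdiff] at hx ⊢
          exact ⟨hx.1, fun h => hx.2 (hNbsubT h)⟩
        exact le_trans (card_le_card this) hNdb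
      refine ⟨(T \ {d}) ∪ (Nd \ T), ?_, ?_, ?_⟩
      · apply cover_surgery hT
        intro r hr y hy
        simp only [mem_singleton] at hr
        subst hr
        simp only [mem_union, mem_sdiff, mem_singleton]
        by_cases hyT : y ∈ T
        · exact Or.inl ⟨hyT, by rintro rfl; exact G.irrefl hy⟩
        · exact Or.inr ⟨(mem_Nd y).mpr hy, hyT⟩
      · intro T' hT'
        have h1 : ((T \ {d}) ∪ (Nd \ T)).card ≤ (T \ {d}).card + (Nd \ T).card :=
          card_union_le _ _
        have h2 : (T \ {d}).card = T.card - 1 := by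
          rw [card_sdiff_of_subset (singleton_subset_iff.mpr hdT), card_singleton]
        have h4 : 1 ≤ T.card := card_pos.mpr ⟨d, hdT⟩
        have h5 := hTle T' hT'
        omega
      · left
        simp only [mem_union, mem_sdiff, mem_singleton]
        refine ⟨Or.inl ⟨haT, had'⟩, Or.inl ⟨hcT, hcd'⟩, ?_, ?_⟩
        · rintro (⟨h, -⟩ | ⟨h, -⟩)
          · exact hbT h
          · exact hbd ((mem_Nd b).mp h).symm
        · rintro (⟨-, h⟩ | ⟨h, -⟩)
          · exact h trivial
          · exact G.irrefl ((mem_Nd d).mp h)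
    · -- b ∉ T, d ∉ T : T itself works
      exact ⟨T, hT, hTle, Or.inl ⟨haT, hcT, hbT, hdT⟩⟩
end
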